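/- Let α = (α₁,…,αₙ) ∈ ℂⁿ, Λ_α = {l ∈ ℤⁿ : l·α = 0}, and E_α = {ξ ∈ ℝⁿ : l·ξ ∈ ℤ for all l ∈ Λ_α}. Then E_α is the topological closure of the set ℤⁿ + ℝ·(Re α) + ℝ·(Im α) in ℝⁿ. -/

import Mathlib

open Filter Topology Submodule

variable {E : Type*} [NormedAddCommGroup E] [InnerProductSpace ℝ E] [FiniteDimensional ℝ E]

lemma line_lemma (D : AddSubgroup E) (hD : IsClosed (D : Set E))
    (x : ℕ → E) (hx : ∀ k, x k ∈ D) (hx0 : ∀ k, x k ≠ 0)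
    (hlim : Tendsto x atTop (𝓝 0)) :
    ∃ e : E, ‖e‖ = 1 ∧ ∀ t : ℝ, t • e ∈ D := by
  have hnorm : ∀ k, ‖x k‖ ≠ 0 := fun k => norm_ne_zero_iff.mpr (hx0 k)
  set unit : ℕ → E := fun k => ‖x k‖⁻¹ • x k with hunit
  have hmem : ∀ k, unit k ∈ Metric.sphere (0 : E) 1 := by
    intro k
    simp [hunit, norm_smul, inv_mul_cancel₀ (hnorm k)]
  obtain ⟨e, he, φ, hφ, hconv⟩ := (isCompact_sphere (0 : E) 1).tendsto_subseq hmem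
  have he1 : ‖e‖ = 1 := by simpa using he
  refine ⟨e, he1, fun t => ?_⟩
  have hlimn : Tendsto (fun k => ‖x (φ k)‖) atTop (𝓝 0) := by
    have := (hlim.comp hφ.tendsto_atTop).norm
    simpa using this
  set c : ℕ → ℝ := fun k => (⌊t / ‖x (φ k)‖⌋ : ℝ) * ‖x (φ k)‖ with hc
  have hct : Tendsto c atTop (𝓝 t) := by
    have hdist : ∀ k, ‖c k - t‖ ≤ ‖x (φ k)‖ := by
      intro k
      have h1 : c k - t = ((⌊t / ‖x (φ k)‖⌋ : ℝ) - t / ‖x (φ k)‖) * ‖x (φ k)‖ := by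
        have hn := hnorm (φ k)
        simp only [hc]
        field_simp
      rw [h1, Real.norm_eq_abs, abs_mul, abs_of_nonneg (norm_nonneg _)]
      have h2 : |(⌊t / ‖x (φ k)‖⌋ : ℝ) - t / ‖x (φ k)‖| ≤ 1 := by
        rw [abs_le]
        constructor
        · linarith [Int.lt_floor_add_one (t / ‖x (φ k)‖)]
        · linarith [Int.floor_le (t / ‖x (φ k)‖)]
      calc |(⌊t / ‖x (φ k)‖⌋ : ℝ) - t / ‖x (φ k)‖| * ‖x (φ k)‖
          ≤ 1 * ‖x (φ k)‖ := by
            exact mul_le_mul_of_nonneg_right h2 (norm_nonneg _)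
        _ = ‖x (φ k)‖ := one_mul _
    have : Tendsto (fun k => c k - t) atTop (𝓝 0) :=
      squeeze_zero_norm hdist hlimn
    simpa using this.add_const t
  have hsmul : Tendsto (fun k => c k • unit (φ k)) atTop (𝓝 (t • e)) :=
    hct.smul hconv
  have heq : ∀ k, c k • unit (φ k) = (⌊t / ‖x (φ k)‖⌋ : ℤ) • x (φ k) := by
    intro k
    rw [hc, hunit]
    rw [smul_smul, ← Int.cast_smul_eq_zsmul ℝ]
    congr 1
    have hn := hnorm (φ k)
    field_simp
  refine hD.mem_of_tendsto hsmul (Eventually.of_forall fun k => ?_)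
  rw [heq k]
  exact D.zsmul_mem (hx (φ k)) _

lemma int_forall_mul_eq_zero {c : ℝ} (h : ∀ t : ℝ, ∃ z : ℤ, t * c = z) : c = 0 := by
  by_contra hc
  obtain ⟨z, hz⟩ := h (1 / (2 * c))
  have h1 : (z : ℝ) = 1 / 2 := by
    rw [← hz]
    field_simp
  have h2 : ((2 * z : ℤ) : ℝ) = 1 := by push_cast; linarith
  have h3 : (2 * z : ℤ) = 1 := by exact_mod_cast h2
  omega

/-- The maximal subspace contained in a subgroup. -/
def maxSubspace (H : AddSubgroup E) : Submodule ℝ E where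
  carrier := {x | ∀ t : ℝ, t • x ∈ H}
  add_mem' := fun {a b} ha hb t => by rw [smul_add]; exact H.add_mem (ha t) (hb t)
  zero_mem' := fun t => by rw [smul_zero]; exact H.zero_mem
  smul_mem' := fun c x hx t => by rw [smul_smul]; exact hx (t * c)

theorem core_bipolar (G : AddSubgroup E) :
    closure (G : Set E) =
      {ξ : E | ∀ y : E, (∀ g ∈ G, ∃ z : ℤ, (inner ℝ y g : ℝ) = z) →
        ∃ z : ℤ, (inner ℝ y ξ : ℝ) = z} := by
  apply le_antisymm
  · -- easy direction
    intro ξ hξ y hy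
    have hclosed : IsClosed {x : E | ∃ z : ℤ, (inner ℝ y x : ℝ) = z} := by
      have : {x : E | ∃ z : ℤ, (inner ℝ y x : ℝ) = z}
          = (fun x : E => (inner ℝ y x : ℝ)) ⁻¹' (Set.range ((↑) : ℤ → ℝ)) := by
        ext x; simp [eq_comm]
      rw [this]
      exact (Int.isClosedEmbedding_coe_real.isClosed_range).preimage
        (innerSL ℝ y).continuous
    exact closure_minimal (fun g hg => hy g hg) hclosed hξ
  · -- hard direction
    intro ξ hξ
    set H : AddSubgroup E := G.topologicalClosure with hH
    have hHc : IsClosed (H : Set E) := isClosed_closure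
    have hGH : ∀ g ∈ G, g ∈ H := fun g hg => subset_closure hg
    -- the annihilator hypothesis transfers to H
    have hannih : ∀ y : E, (∀ h ∈ H, ∃ z : ℤ, (inner ℝ y h : ℝ) = z) →
        ∃ z : ℤ, (inner ℝ y ξ : ℝ) = z :=
      fun y hy => hξ y (fun g hg => hy g (hGH g hg))
    set V : Submodule ℝ E := maxSubspace H with hV
    have hVH : ∀ x ∈ V, x ∈ H := fun x hx => by simpa using hx 1
    set D : AddSubgroup E := H ⊓ (Vᗮ).toAddSubgroup with hDdef
    have hDV : ∀ x ∈ D, x ∈ Vᗮ := fun x hx => hx.2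
    have hDH : ∀ x ∈ D, x ∈ H := fun x hx => hx.1
    have hDc : IsClosed (D : Set E) := by
      have : (D : Set E) = (H : Set E) ∩ (Vᗮ : Set E) := rfl
      rw [this]
      exact hHc.inter (Submodule.closed_of_finiteDimensional Vᗮ)
    -- D is discrete
    have hsep : ∃ ε : ℝ, 0 < ε ∧ ∀ x ∈ D, ‖x‖ < ε → x = 0 := by
      by_contra hcon
      push_neg at hcon
      have hseq : ∀ k : ℕ, ∃ x, x ∈ D ∧ ‖x‖ < 1 / (k + 1) ∧ x ≠ 0 := by
        intro k
        obtain ⟨x, hx1, hx2, hx3⟩ := hcon (1 / (k + 1)) (by positivity)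
        exact ⟨x, hx1, hx2, hx3⟩
      choose x hxD hxn hx0 using hseq
      have hlim : Filter.Tendsto x Filter.atTop (𝓝 0) := by
        rw [tendsto_zero_iff_norm_tendsto_zero]
        refine squeeze_zero (fun k => norm_nonneg _) (fun k => le_of_lt (hxn k)) ?_
        exact tendsto_one_div_add_atTop_nhds_zero_nat
      obtain ⟨e, he1, heD⟩ := line_lemma D hDc x hxD hx0 hlim
      have heV : e ∈ V := fun t => hDH _ (heD t)
      have heVp : e ∈ Vᗮ := hDV _ (by simpa using heD 1)
      have : e = 0 := by
        have := heVp e heV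
        rwa [real_inner_self_eq_norm_sq, pow_eq_zero_iff, norm_eq_zero] at this
        norm_num
      rw [this] at he1; simp at he1
    obtain ⟨ε, hε, hsep⟩ := hsep
    -- W = span of D
    set W : Submodule ℝ E := Submodule.span ℝ (D : Set E) with hW
    have hDW : ∀ x ∈ D, x ∈ W := fun x hx => Submodule.subset_span hx
    have hWVp : W ≤ Vᗮ := Submodule.span_le.mpr (fun x hx => hDV x hx)
    -- the lattice L inside W
    set L : Submodule ℤ W := {
      carrier := {x : W | (x : E) ∈ D}
      add_mem' := fun {a b} ha hb => by
        simp only [Set.mem_setOf_eq, Submodule.coe_add] at *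
        exact D.add_mem ha hb
      zero_mem' := by simp only [Set.mem_setOf_eq, Submodule.coe_zero]; exact D.zero_mem
      smul_mem' := fun c x hx => by
        simp only [Set.mem_setOf_eq] at *
        rw [Submodule.coe_smul_of_tower]
        exact D.zsmul_mem hx c } with hLdef
    have hmemL : ∀ x : W, x ∈ L ↔ (x : E) ∈ D := fun x => Iff.rfl
    haveI hdisc : DiscreteTopology L := by
      rw [discreteTopology_iff_isOpen_singleton_zero]
      have heq : ({0} : Set L) = (fun x : L => ((x : W) : E)) ⁻¹' Metric.ball 0 ε := by
        ext x
        simp only [Set.mem_singleton_iff, Set.mem_preimage, Metric.mem_ball, dist_zero_right]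
        constructor
        · intro h; rw [h]; simpa using hε
        · intro h
          have hx0 : ((x : W) : E) = 0 := hsep _ x.2 h
          exact Subtype.ext (Subtype.ext hx0)
      rw [heq]
      exact Metric.isOpen_ball.preimage
        (continuous_subtype_val.comp continuous_subtype_val)
    haveI hZL : IsZLattice ℝ L := by
      constructor
      apply Submodule.map_injective_of_injective (Submodule.injective_subtype W)
      rw [Submodule.map_span, Submodule.map_top, Submodule.range_subtype]
      have himg : W.subtype '' (L : Set W) = (D : Set E) := by
        ext x
        constructor
        · rintro ⟨y, hy, rfl⟩; exact hy
        · intro hx; exact ⟨⟨x, hDW x hx⟩, hx, rfl⟩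
      rw [himg, hW]
    haveI := ZLattice.module_free ℝ L
    haveI := ZLattice.module_finite ℝ L
    set b : Module.Basis (Module.Free.ChooseBasisIndex ℤ L) ℤ L := Module.Free.chooseBasis ℤ L with hb
    set bW := Module.Basis.ofZLatticeBasis ℝ L b with hbW
    have hbaseL : Submodule.span ℤ (Set.range bW) = L := Module.Basis.ofZLatticeBasis_span ℝ L b
    -- bilinear form on W
    set B : LinearMap.BilinForm ℝ W := LinearMap.mk₂ ℝ
      (fun x y : W => (inner ℝ (x : E) (y : E) : ℝ))
      (fun x y z => by simp [inner_add_left])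
      (fun c x y => by simp [real_inner_smul_left])
      (fun x y z => by simp [inner_add_right])
      (fun c x y => by simp [real_inner_smul_right]) with hBdef
    have hBapp : ∀ x y : W, B x y = (inner ℝ (x : E) (y : E) : ℝ) := fun x y => rfl
    have hBnd : B.Nondegenerate := by
      constructor
      · intro x hx
        have h1 := hx x
        rw [hBapp] at h1
        exact Subtype.ext (inner_self_eq_zero.mp h1)
      intro x hx
      have h1 := hx x
      rw [hBapp] at h1
      exact Subtype.ext (inner_self_eq_zero.mp h1)
    have hBsym : B.IsSymm := by
      rw [LinearMap.BilinForm.isSymm_def]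
      intro x y
      rw [hBapp, hBapp]
      exact real_inner_comm _ _
    have hbip := LinearMap.BilinForm.dualSubmodule_dualSubmodule_of_basis (R := ℤ) B hBnd hBsym bW
    -- decomposition of H
    have hdecomp : ∀ h ∈ H, ∃ v ∈ V, ∃ d ∈ D, h = v + d := by
      intro h hh
      refine ⟨orthogonalProjection V h, (orthogonalProjection V h).2,
        h - orthogonalProjection V h,
        ⟨H.sub_mem hh (hVH _ (orthogonalProjection V h).2),
          sub_starProjection_mem_orthogonal (K := V) h⟩, by abel⟩
    -- decompose ξ
    set a : E := (orthogonalProjection V ξ : E) with ha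
    have haV : a ∈ V := (orthogonalProjection V ξ).2
    set r : E := ξ - a with hr
    have hrVp : r ∈ Vᗮ := sub_starProjection_mem_orthogonal (K := V) ξ
    have hξar : ξ = a + r := by rw [hr]; abel
    -- show r ∈ W
    set w : E := (orthogonalProjection W r : E) with hw
    have hwW : w ∈ W := (orthogonalProjection W r).2
    set u : E := r - w with hu
    have hrwu : r = w + u := by rw [hu]; abel
    have huVp : u ∈ Vᗮ := Vᗮ.sub_mem hrVp (hWVp hwW)
    have huWp : u ∈ Wᗮ := sub_starProjection_mem_orthogonal (K := W) r
    have huann : ∀ t : ℝ, ∀ h ∈ H, (inner ℝ (t • u) h : ℝ) = 0 := by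
      intro t h hh
      obtain ⟨v, hv, d, hd, rfl⟩ := hdecomp h hh
      have h1 : (inner ℝ u v : ℝ) = 0 := by
        rw [real_inner_comm]; exact huVp v hv
      have h2 : (inner ℝ u d : ℝ) = 0 := by
        rw [real_inner_comm]; exact huWp d (hDW d hd)
      rw [inner_add_right, real_inner_smul_left, real_inner_smul_left, h1, h2]
      ring
    have huξ : (inner ℝ u ξ : ℝ) = (inner ℝ u u : ℝ) := by
      have h1 : (inner ℝ u a : ℝ) = 0 := by
        rw [real_inner_comm]; exact huVp a haV
      have h2 : (inner ℝ u w : ℝ) = 0 := by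
        rw [real_inner_comm]; exact huWp w hwW
      rw [hξar, hrwu, inner_add_right, inner_add_right, h1, h2]
      ring
    have hu0 : u = 0 := by
      rw [← inner_self_eq_zero (𝕜 := ℝ)]
      apply int_forall_mul_eq_zero
      intro t
      obtain ⟨z, hz⟩ := hannih (t • u) (fun h hh => ⟨0, by rw [huann t h hh]; simp⟩)
      rw [real_inner_smul_left, huξ] at hz
      exact ⟨z, hz⟩
    have hrW : r ∈ W := by
      rw [hrwu, hu0, add_zero]; exact hwW
    -- show r ∈ D via bipolar
    set rW : W := ⟨r, hrW⟩ with hrWdef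
    have hrL : rW ∈ L := by
      rw [← hbaseL, ← hbip]
      intro y hy
      -- y is in the dual of L
      have hyL : ∀ d : W, d ∈ L → ∃ z : ℤ, (z : ℝ) = (inner ℝ (y : E) (d : E) : ℝ) := by
        intro d hd
        have := hy d (by rw [hbaseL]; exact hd)
        rw [Submodule.mem_one] at this
        obtain ⟨z, hz⟩ := this
        exact ⟨z, by rw [← hBapp y d, ← hz]; simp⟩
      have hyann : ∀ h ∈ H, ∃ z : ℤ, (inner ℝ (y : E) h : ℝ) = z := by
        intro h hh
        obtain ⟨v, hv, d, hd, rfl⟩ := hdecomp h hh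
        have h1 : (inner ℝ (y : E) v : ℝ) = 0 := by
          rw [real_inner_comm]; exact (hWVp y.2) v hv
        obtain ⟨z, hz⟩ := hyL ⟨d, hDW d hd⟩ hd
        exact ⟨z, by rw [inner_add_right, h1, zero_add, ← hz]⟩
      obtain ⟨z, hz⟩ := hannih (y : E) hyann
      have h1 : (inner ℝ (y : E) a : ℝ) = 0 := by
        rw [real_inner_comm]; exact (hWVp y.2) a haV
      rw [Submodule.mem_one]
      refine ⟨z, ?_⟩
      have h2 : (inner ℝ (y : E) r : ℝ) = z := by
        rw [hξar, inner_add_right, h1, zero_add] at hz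
        exact hz
      rw [hBapp]
      rw [real_inner_comm]
      simp only [algebraMap_int_eq, eq_intCast]
      exact h2.symm
    have hrD : r ∈ D := hrL
    have hξH : ξ ∈ H := by
      rw [hξar]
      exact H.add_mem (hVH a haV) (hDH r hrD)
    exact hξH

theorem stmt_1 (n : ℕ) (α : Fin n → ℂ) :
    {ξ : Fin n → ℝ | ∀ l : Fin n → ℤ,
        (∑ i, (l i : ℂ) * α i) = 0 → ∃ z : ℤ, ∑ i, (l i : ℝ) * ξ i = z} =
    closure {x : Fin n → ℝ | ∃ (m : Fin n → ℤ) (s t : ℝ),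
        x = fun i => (m i : ℝ) + s * (α i).re + t * (α i).im} := by
  classical
  have hinner : ∀ x y : EuclideanSpace ℝ (Fin n), (inner ℝ x y : ℝ) = ∑ i, x i * y i := by
    intro x y
    simp [PiLp.inner_apply, RCLike.inner_apply, mul_comm]
  set G : AddSubgroup (EuclideanSpace ℝ (Fin n)) := {
    carrier := {x | ∃ (m : Fin n → ℤ) (s t : ℝ),
      x = fun i => (m i : ℝ) + s * (α i).re + t * (α i).im}
    add_mem' := by
      rintro x y ⟨m1, s1, t1, h1⟩ ⟨m2, s2, t2, h2⟩
      refine ⟨m1 + m2, s1 + s2, t1 + t2, ?_⟩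
      rw [WithLp.ofLp_add, h1, h2]
      funext i
      show ((fun i => (m1 i : ℝ) + s1 * (α i).re + t1 * (α i).im) i)
        + ((fun i => (m2 i : ℝ) + s2 * (α i).re + t2 * (α i).im) i) = _
      simp only [Pi.add_apply]
      push_cast
      ring
    zero_mem' := ⟨0, 0, 0, by funext i; show (0 : ℝ) = _; simp⟩
    neg_mem' := by
      rintro x ⟨m, s, t, h1⟩
      refine ⟨-m, -s, -t, ?_⟩
      rw [WithLp.ofLp_neg, h1]
      funext i
      show -((fun i => (m i : ℝ) + s * (α i).re + t * (α i).im) i) = _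
      simp only [Pi.neg_apply]
      push_cast
      ring } with hG
  have key := core_bipolar G
  suffices h : {ξ : EuclideanSpace ℝ (Fin n) | ∀ l : Fin n → ℤ,
        (∑ i, (l i : ℂ) * α i) = 0 → ∃ z : ℤ, ∑ i, (l i : ℝ) * ξ i = z} =
      closure {x : EuclideanSpace ℝ (Fin n) | ∃ (m : Fin n → ℤ) (s t : ℝ),
        x = fun i => (m i : ℝ) + s * (α i).re + t * (α i).im} from by
      have hc := (PiLp.homeomorph 2 (fun _ : Fin n => ℝ)).preimage_closure {x : Fin n → ℝ |
        ∃ (m : Fin n → ℤ) (s t : ℝ), x = fun i => (m i : ℝ) + s * (α i).re + t * (α i).im}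
      ext ξ
      exact Set.ext_iff.mp (h.trans hc.symm) (WithLp.toLp 2 ξ)
  have hGset : {x : EuclideanSpace ℝ (Fin n) | ∃ (m : Fin n → ℤ) (s t : ℝ),
      x = fun i => (m i : ℝ) + s * (α i).re + t * (α i).im} = (G : Set _) := rfl
  rw [hGset, key]
  ext ξ
  simp only [Set.mem_setOf_eq]
  constructor
  · -- statement set ⊆ core set
    intro hξ y hy
    -- y has integer coordinates
    have hyint : ∀ i : Fin n, ∃ z : ℤ, y i = z := by
      intro i
      obtain ⟨z, hz⟩ := hy (WithLp.toLp 2 (fun j => ((Pi.single i 1 : Fin n → ℤ) j : ℝ)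
          + 0 * (α j).re + 0 * (α j).im)) ⟨Pi.single i 1, 0, 0, rfl⟩
      refine ⟨z, ?_⟩
      rw [hinner] at hz
      simp only [WithLp.ofLp_toLp, Pi.single_apply, zero_mul, add_zero] at hz
      rw [Finset.sum_congr rfl (fun j _ => by
        rw [show (((if j = i then (1:ℤ) else 0) : ℤ) : ℝ) = if j = i then (1:ℝ) else 0 by
          split <;> simp])] at hz
      simpa [Finset.sum_ite_eq] using hz
    choose l hl using hyint
    -- y annihilates the two real directions
    have hyu : ∑ i, y i * (α i).re = 0 := by
      apply int_forall_mul_eq_zero (c := ∑ i, y i * (α i).re)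
      intro s
      obtain ⟨z, hz⟩ := hy (WithLp.toLp 2 (fun j => ((0 : Fin n → ℤ) j : ℝ) + s * (α j).re + 0 * (α j).im))
        ⟨0, s, 0, rfl⟩
      refine ⟨z, ?_⟩
      rw [hinner] at hz
      rw [← hz, Finset.mul_sum]
      apply Finset.sum_congr rfl
      intro j _
      simp
      ring
    have hyv : ∑ i, y i * (α i).im = 0 := by
      apply int_forall_mul_eq_zero (c := ∑ i, y i * (α i).im)
      intro s
      obtain ⟨z, hz⟩ := hy (WithLp.toLp 2 (fun j => ((0 : Fin n → ℤ) j : ℝ) + 0 * (α j).re + s * (α j).im))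
        ⟨0, 0, s, rfl⟩
      refine ⟨z, ?_⟩
      rw [hinner] at hz
      rw [← hz, Finset.mul_sum]
      apply Finset.sum_congr rfl
      intro j _
      simp
      ring
    have hlα : (∑ i, (l i : ℂ) * α i) = 0 := by
      apply Complex.ext
      · rw [Complex.re_sum]
        simp only [Complex.mul_re, Complex.intCast_re, Complex.intCast_im, zero_mul, sub_zero]
        rw [Complex.zero_re]
        rw [← hyu]
        exact Finset.sum_congr rfl (fun i _ => by rw [hl i])
      · rw [Complex.im_sum]
        simp only [Complex.mul_im, Complex.intCast_re, Complex.intCast_im, zero_mul, add_zero]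
        rw [Complex.zero_im]
        rw [← hyv]
        exact Finset.sum_congr rfl (fun i _ => by rw [hl i])
    obtain ⟨z, hz⟩ := hξ l hlα
    refine ⟨z, ?_⟩
    rw [hinner, ← hz]
    exact Finset.sum_congr rfl (fun i _ => by rw [hl i])
  · -- core set ⊆ statement set
    intro hξ l hlα
    have hre : ∑ i, (l i : ℝ) * (α i).re = 0 := by
      have := congrArg Complex.re hlα
      rw [Complex.re_sum, Complex.zero_re] at this
      simpa [Complex.mul_re] using this
    have him : ∑ i, (l i : ℝ) * (α i).im = 0 := by
      have := congrArg Complex.im hlα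
      rw [Complex.im_sum, Complex.zero_im] at this
      simpa [Complex.mul_im] using this
    set y : EuclideanSpace ℝ (Fin n) := WithLp.toLp 2 (fun i => (l i : ℝ)) with hy
    have hyann : ∀ g ∈ G, ∃ z : ℤ, (inner ℝ y g : ℝ) = z := by
      rintro g ⟨m, s, t, hg⟩
      refine ⟨∑ i, l i * m i, ?_⟩
      rw [hinner, hg]
      beta_reduce
      have step : ∀ i : Fin n, y i * ((m i : ℝ) + s * (α i).re + t * (α i).im)
          = (l i : ℝ) * (m i : ℝ) + s * ((l i : ℝ) * (α i).re)
            + t * ((l i : ℝ) * (α i).im) := by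
        intro i; rw [hy]; ring
      rw [Finset.sum_congr rfl (fun i _ => step i), Finset.sum_add_distrib,
        Finset.sum_add_distrib, ← Finset.mul_sum, ← Finset.mul_sum, hre, him]
      push_cast
      ring
    obtain ⟨z, hz⟩ := hξ y hyann
    refine ⟨z, ?_⟩
    rw [hinner] at hz
    exact hz
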